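/- The 3×3 Hermitian matrix Θ = [[1, i√2 γ, -γ], [-i√2 γ, 1-γ+2γ², i√2 γ], [-γ, -i√2 γ, 1]] has eigenvalues 1-γ and 1 + γ² ± √(5γ² + γ⁴ - 2γ³), and is positive definite for all γ in the open interval (0, 1). -/

import Mathlib

open Complex Matrix ComplexOrder

lemma posdef_conj {n : Type*} [Fintype n] [DecidableEq n] {D B : Matrix n n ℂ}
    (hD : D.PosDef) (hB : IsUnit B) : (B * D * Bᴴ).PosDef := by
  refine Matrix.PosDef.of_dotProduct_mulVec_pos (Matrix.isHermitian_mul_mul_conjTranspose B hD.1) fun x hx => ?_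
  have hBx : Bᴴ *ᵥ x ≠ 0 := by
    have : Function.Injective (Bᴴ.mulVec) :=
      Matrix.mulVec_injective_iff_isUnit.mpr ((Matrix.isUnit_conjTranspose B).mpr hB)
    intro h
    exact hx (this (by simpa using h))
  have := hD.dotProduct_mulVec_pos hBx
  simpa only [star_mulVec, dotProduct_mulVec, vecMul_vecMul, Matrix.mul_assoc,
    conjTranspose_conjTranspose] using this

theorem stmt6 (γ : ℝ) :
    spectrum ℂ
      (!![1, I * Real.sqrt 2 * γ, (-γ : ℂ);
          -(I * Real.sqrt 2 * γ), ((1 - γ + 2 * γ ^ 2 : ℝ) : ℂ), I * Real.sqrt 2 * γ;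
          (-γ : ℂ), -(I * Real.sqrt 2 * γ), 1] : Matrix (Fin 3) (Fin 3) ℂ)
      = {((1 - γ : ℝ) : ℂ),
         ((1 + γ ^ 2 + Real.sqrt (5 * γ ^ 2 + γ ^ 4 - 2 * γ ^ 3) : ℝ) : ℂ),
         ((1 + γ ^ 2 - Real.sqrt (5 * γ ^ 2 + γ ^ 4 - 2 * γ ^ 3) : ℝ) : ℂ)} ∧
    (0 < γ → γ < 1 →
      (!![1, I * Real.sqrt 2 * γ, (-γ : ℂ);
          -(I * Real.sqrt 2 * γ), ((1 - γ + 2 * γ ^ 2 : ℝ) : ℂ), I * Real.sqrt 2 * γ;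
          (-γ : ℂ), -(I * Real.sqrt 2 * γ), 1] : Matrix (Fin 3) (Fin 3) ℂ).PosDef) := by
  set M : Matrix (Fin 3) (Fin 3) ℂ :=
    !![1, I * Real.sqrt 2 * γ, (-γ : ℂ);
       -(I * Real.sqrt 2 * γ), ((1 - γ + 2 * γ ^ 2 : ℝ) : ℂ), I * Real.sqrt 2 * γ;
       (-γ : ℂ), -(I * Real.sqrt 2 * γ), 1] with hMdef
  have hd : (0:ℝ) ≤ 5 * γ ^ 2 + γ ^ 4 - 2 * γ ^ 3 := by
    nlinarith [sq_nonneg (γ*(γ-1)), sq_nonneg γ]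
  have hdet : ∀ μ : ℂ, (μ • (1 : Matrix (Fin 3) (Fin 3) ℂ) - M).det
      = (μ - ((1 - γ : ℝ) : ℂ)) *
        (μ - ((1 + γ ^ 2 + Real.sqrt (5 * γ ^ 2 + γ ^ 4 - 2 * γ ^ 3) : ℝ) : ℂ)) *
        (μ - ((1 + γ ^ 2 - Real.sqrt (5 * γ ^ 2 + γ ^ 4 - 2 * γ ^ 3) : ℝ) : ℂ)) := by
    intro μ
    have ht : ((Real.sqrt (5 * γ ^ 2 + γ ^ 4 - 2 * γ ^ 3) : ℝ) : ℂ) ^ 2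
        = 5 * (γ:ℂ) ^ 2 + (γ:ℂ) ^ 4 - 2 * (γ:ℂ) ^ 3 := by
      rw [← Complex.ofReal_pow, Real.sq_sqrt hd]; push_cast; ring
    have hc : (I * (Real.sqrt 2 : ℝ) * (γ:ℂ)) ^ 2 = -2 * (γ:ℂ) ^ 2 := by
      rw [mul_pow, mul_pow, Complex.I_sq, ← Complex.ofReal_pow,
        Real.sq_sqrt (by norm_num : (0:ℝ) ≤ 2)]
      push_cast; ring
    rw [hMdef, Matrix.det_fin_three]
    simp only [Matrix.sub_apply, Matrix.smul_apply, Matrix.one_apply, Matrix.cons_val',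
      Matrix.cons_val_zero, Matrix.cons_val_one, Matrix.head_cons, Matrix.empty_val',
      Matrix.cons_val_fin_one, Matrix.head_fin_const, Matrix.cons_val_two, Matrix.tail_cons,
      Matrix.of_apply]
    push_cast
    norm_num
    linear_combination (2*(μ - 1 + (γ:ℂ))) * hc + (μ - (1 - (γ:ℂ))) * ht
  have hspec : spectrum ℂ M
      = {((1 - γ : ℝ) : ℂ),
         ((1 + γ ^ 2 + Real.sqrt (5 * γ ^ 2 + γ ^ 4 - 2 * γ ^ 3) : ℝ) : ℂ),
         ((1 + γ ^ 2 - Real.sqrt (5 * γ ^ 2 + γ ^ 4 - 2 * γ ^ 3) : ℝ) : ℂ)} := by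
    ext μ
    simp only [spectrum.mem_iff, Matrix.isUnit_iff_isUnit_det, isUnit_iff_ne_zero, not_not,
      Set.mem_insert_iff, Set.mem_singleton_iff, Algebra.algebraMap_eq_smul_one]
    rw [hdet μ, mul_eq_zero, mul_eq_zero, sub_eq_zero, sub_eq_zero, sub_eq_zero, or_assoc]
  refine ⟨hspec, fun h0 h1 => ?_⟩
  -- Hermitian
  have hH : M.IsHermitian := by
    rw [Matrix.IsHermitian, hMdef]
    ext i j
    fin_cases i <;> fin_cases j <;>
      simp [Matrix.conjTranspose_apply, Complex.conj_ofReal, _root_.map_mul, Complex.conj_I]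
  -- eigenvalues are positive
  have heig : ∀ i, 0 < hH.eigenvalues i := by
    intro i
    have hmem : ((hH.eigenvalues i : ℝ) : ℂ) ∈ spectrum ℂ M := by
      have := hH.eigenvalues_mem_spectrum_real i
      exact spectrum.algebraMap_mem ℂ this
    rw [hspec] at hmem
    have h2 : Real.sqrt (5 * γ ^ 2 + γ ^ 4 - 2 * γ ^ 3) < 1 + γ ^ 2 := by
      rw [show (1 + γ ^ 2 : ℝ) = Real.sqrt ((1 + γ ^ 2) ^ 2) from
        (Real.sqrt_sq (by positivity)).symm]
      apply Real.sqrt_lt_sqrt hd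
      nlinarith [sq_nonneg (1 - γ), mul_pos h0 h0]
    have hs0 : 0 ≤ Real.sqrt (5 * γ ^ 2 + γ ^ 4 - 2 * γ ^ 3) := Real.sqrt_nonneg _
    simp only [Set.mem_insert_iff, Set.mem_singleton_iff, Complex.ofReal_inj] at hmem
    rcases hmem with h | h | h <;> rw [h] <;> nlinarith
  -- spectral theorem
  have hspec_thm := hH.spectral_theorem
  rw [hspec_thm]
  have hDpos : (Matrix.diagonal (RCLike.ofReal ∘ hH.eigenvalues) : Matrix (Fin 3) (Fin 3) ℂ).PosDef := by
    rw [Matrix.posDef_diagonal_iff]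
    intro i
    simpa using Complex.zero_lt_real.mpr (heig i)
  have hU : IsUnit (hH.eigenvectorUnitary : Matrix (Fin 3) (Fin 3) ℂ) :=
    ⟨Unitary.toUnits hH.eigenvectorUnitary, rfl⟩
  rw [Unitary.conjStarAlgAut_apply, Matrix.star_eq_conjTranspose]
  exact posdef_conj hDpos hU
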